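/- Let r : ℤ → ℝ² be a nondegenerate discrete planar curve with constant centroaffine curvatures, κ_k = κ ≠ 0 and κ̄_k = κ̄ for all k ∈ ℤ, and let p ≥ 3 be an integer. Then r is closed with minimal period p (i.e. p is the smallest positive integer with r(k+p) = r(k) for all k) if and only if κ = 1, |κ̄| ≤ 2, and there exist θ ∈ ℝ and an integer l coprime to p such that cos θ = κ̄/2 and p·θ = 2lπ. -/

import Mathlib

/-- Planar determinant of two vectors in ℝ². -/
def det2 (u v : Fin 2 → ℝ) : ℝ := u 0 * v 1 - u 1 * v 0

/-- Edge tangent vector of a discrete planar curve. -/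
def tang2 (r : ℤ → Fin 2 → ℝ) (k : ℤ) : Fin 2 → ℝ := r (k + 1) - r k

/-- Nondegeneracy of a discrete planar curve. -/
def Nondeg2 (r : ℤ → Fin 2 → ℝ) : Prop :=
  ∀ k : ℤ, det2 (tang2 r (k - 1)) (tang2 r k) ≠ 0

/-- First centroaffine curvature. -/
noncomputable def kappa2 (r : ℤ → Fin 2 → ℝ) (k : ℤ) : ℝ :=
  det2 (tang2 r k) (tang2 r (k + 1)) / det2 (tang2 r (k - 1)) (tang2 r k)

/-- Second centroaffine curvature. -/
noncomputable def kbar2 (r : ℤ → Fin 2 → ℝ) (k : ℤ) : ℝ :=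
  det2 (tang2 r (k - 1)) (tang2 r (k + 1)) / det2 (tang2 r (k - 1)) (tang2 r k)

namespace Stmt5Aux

def cseq (κ κbar : ℝ) : ℕ → ℝ
  | 0 => 1
  | 1 => 0
  | n+2 => κbar * cseq κ κbar (n+1) - κ * cseq κ κbar n

def sseq (κ κbar : ℝ) : ℕ → ℝ
  | 0 => 0
  | 1 => 1
  | n+2 => κbar * sseq κ κbar (n+1) - κ * sseq κ κbar n

lemma cseq_rec (κ κbar : ℝ) (n : ℕ) :
    cseq κ κbar (n+2) = κbar * cseq κ κbar (n+1) - κ * cseq κ κbar n := rfl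

lemma sseq_rec (κ κbar : ℝ) (n : ℕ) :
    sseq κ κbar (n+2) = κbar * sseq κ κbar (n+1) - κ * sseq κ κbar n := rfl

lemma sol_eval (κ κbar : ℝ) (u : ℕ → ℝ)
    (hu : ∀ n, u (n+2) = κbar * u (n+1) - κ * u n) :
    ∀ n, u n = u 0 * cseq κ κbar n + u 1 * sseq κ κbar n := by
  have key : ∀ n, (u n = u 0 * cseq κ κbar n + u 1 * sseq κ κbar n) ∧
      (u (n+1) = u 0 * cseq κ κbar (n+1) + u 1 * sseq κ κbar (n+1)) := by
    intro n
    induction n with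
    | zero => constructor <;> simp [cseq, sseq]
    | succ n ih =>
      refine ⟨ih.2, ?_⟩
      rw [hu n, cseq_rec, sseq_rec]
      linear_combination κbar * ih.2 - κ * ih.1
  exact fun n => (key n).1

lemma casoratian (κ κbar : ℝ) :
    ∀ n, cseq κ κbar n * sseq κ κbar (n+1) - cseq κ κbar (n+1) * sseq κ κbar n = κ ^ n := by
  intro n
  induction n with
  | zero => simp [cseq, sseq]
  | succ n ih =>
    rw [pow_succ, cseq_rec, sseq_rec]
    linear_combination κ * ih

lemma cos_sol (θ : ℝ) (n : ℕ) :
    Real.cos ((n:ℝ)*θ) = cseq 1 (2*Real.cos θ) n + Real.cos θ * sseq 1 (2*Real.cos θ) n := by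
  have h := sol_eval 1 (2*Real.cos θ) (fun n => Real.cos ((n:ℝ)*θ)) (fun n => by
    push_cast
    have h1 : ((n:ℝ)+2)*θ = ((n:ℝ)+1)*θ + θ := by ring
    have h2 : (n:ℝ)*θ = ((n:ℝ)+1)*θ - θ := by ring
    simp only [h1]
    rw [Real.cos_add, h2, Real.cos_sub]
    ring) n
  simpa using h

lemma sin_sol (θ : ℝ) (n : ℕ) :
    Real.sin ((n:ℝ)*θ) = Real.sin θ * sseq 1 (2*Real.cos θ) n := by
  have h := sol_eval 1 (2*Real.cos θ) (fun n => Real.sin ((n:ℝ)*θ)) (fun n => by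
    push_cast
    have h1 : ((n:ℝ)+2)*θ = ((n:ℝ)+1)*θ + θ := by ring
    have h2 : (n:ℝ)*θ = ((n:ℝ)+1)*θ - θ := by ring
    simp only [h1]
    rw [Real.sin_add, h2, Real.sin_sub]
    ring) n
  simpa using h

lemma indep_components {u v : Fin 2 → ℝ} (h : det2 u v ≠ 0) {a b : ℝ}
    (hab : a • u + b • v = 0) : a = 0 ∧ b = 0 := by
  have h0 := congrFun hab 0
  have h1 := congrFun hab 1
  simp only [Pi.add_apply, Pi.smul_apply, smul_eq_mul, Pi.zero_apply] at h0 h1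
  constructor
  · have ha : a * det2 u v = 0 := by
      simp only [det2]; linear_combination v 1 * h0 - v 0 * h1
    exact (mul_eq_zero.mp ha).resolve_right h
  · have hb : b * det2 u v = 0 := by
      simp only [det2]; linear_combination u 0 * h1 - u 1 * h0
    exact (mul_eq_zero.mp hb).resolve_right h

lemma vec_formula (t : ℤ → Fin 2 → ℝ) (κ κbar : ℝ)
    (hrec2 : ∀ k : ℤ, t (k+2) = κbar • t (k+1) - κ • t k) :
    ∀ n : ℕ, t (n:ℤ) = cseq κ κbar n • t 0 + sseq κ κbar n • t 1 := by
  have key : ∀ n : ℕ, (t (n:ℤ) = cseq κ κbar n • t 0 + sseq κ κbar n • t 1) ∧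
      (t ((n:ℤ)+1) = cseq κ κbar (n+1) • t 0 + sseq κ κbar (n+1) • t 1) := by
    intro n
    induction n with
    | zero => constructor <;> simp [cseq, sseq]
    | succ n ih =>
      have e : ((n+1:ℕ):ℤ) = (n:ℤ)+1 := by push_cast; ring
      refine ⟨by rw [e]; exact ih.2, ?_⟩
      rw [e, show (n:ℤ)+1+1 = (n:ℤ)+2 by ring, hrec2 (n:ℤ), ih.1, ih.2,
        cseq_rec, sseq_rec]
      funext i
      simp only [Pi.add_apply, Pi.sub_apply, Pi.smul_apply, smul_eq_mul]
      ring
  exact fun n => (key n).1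


lemma per_ext (t : ℤ → Fin 2 → ℝ) (κ κbar : ℝ) (hκ : κ ≠ 0)
    (hrec2 : ∀ k : ℤ, t (k+2) = κbar • t (k+1) - κ • t k)
    (q : ℕ) (h0 : t (q:ℤ) = t 0) (h1 : t ((q:ℤ)+1) = t 1) :
    ∀ k : ℤ, t (k + q) = t k := by
  have key : ∀ k : ℤ, t (k + q) = t k ∧ t (k + q + 1) = t (k+1) := by
    intro k
    induction k using Int.induction_on with
    | zero => refine ⟨by simpa using h0, by simpa using h1⟩
    | succ i ih =>
      refine ⟨by rw [show (i:ℤ)+1+q = i+q+1 by ring]; exact ih.2, ?_⟩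
      have e1 := hrec2 ((i:ℤ)+q)
      have e2 := hrec2 (i:ℤ)
      rw [show (i:ℤ)+1+q+1 = i+q+2 by ring, e1, ih.1, ih.2,
        show (i:ℤ)+1+1 = i+2 by ring, e2]
    | pred i ih =>
      refine ⟨?_, by rw [show (-(i:ℤ)-1)+q+1 = -(i:ℤ)+q by ring,
        show (-(i:ℤ)-1)+1 = -(i:ℤ) by ring]; exact ih.1⟩
      have e1 := hrec2 (-(i:ℤ)-1+q)
      have e2 := hrec2 (-(i:ℤ)-1)
      rw [show -(i:ℤ)-1+q+2 = -(i:ℤ)+q+1 by ring,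
        show -(i:ℤ)-1+q+1 = -(i:ℤ)+q by ring] at e1
      rw [show -(i:ℤ)-1+2 = -(i:ℤ)+1 by ring,
        show -(i:ℤ)-1+1 = -(i:ℤ) by ring] at e2
      have hc : κ • t (-(i:ℤ)-1+q) = κ • t (-(i:ℤ)-1) := by
        have d1 : κ • t (-(i:ℤ)-1+q) = κbar • t (-(i:ℤ)+q) - t (-(i:ℤ)+q+1) := by
          rw [e1]; abel
        have d2 : κ • t (-(i:ℤ)-1) = κbar • t (-(i:ℤ)) - t (-(i:ℤ)+1) := by
          rw [e2]; abel
        rw [d1, d2, ih.1, ih.2]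
      exact smul_right_injective (Fin 2 → ℝ) hκ hc
  exact fun k => (key k).1

lemma step_r (r : ℤ → Fin 2 → ℝ) (k : ℤ) : r (k+1) = r k + tang2 r k := by
  simp [tang2]

lemma tsum_range (r : ℤ → Fin 2 → ℝ) :
    ∀ n : ℕ, r (n:ℤ) - r 0 = ∑ j ∈ Finset.range n, tang2 r (j:ℤ) := by
  intro n
  induction n with
  | zero => simp
  | succ n ih =>
    rw [Finset.sum_range_succ, ← ih, show ((n+1:ℕ):ℤ) = (n:ℤ)+1 by push_cast; ring,
      step_r r (n:ℤ)]
    abel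

lemma closed_of_per (r : ℤ → Fin 2 → ℝ) (κ κbar : ℝ) (hne : κbar - 1 - κ ≠ 0)
    (hrec2 : ∀ k : ℤ, tang2 r (k+2) = κbar • tang2 r (k+1) - κ • tang2 r k)
    (q : ℕ) (hper : ∀ k : ℤ, tang2 r (k + q) = tang2 r k) :
    ∀ k : ℤ, r (k + q) = r k := by
  set f : ℕ → (Fin 2 → ℝ) := fun j => tang2 r (j:ℤ) with hf
  set S := ∑ j ∈ Finset.range q, f j with hS
  have hfq : f q = f 0 := by
    simpa [hf] using hper 0
  have hfq1 : f (q+1) = f 1 := by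
    have := hper 1
    rw [show (1:ℤ)+q = (q:ℤ)+1 by ring] at this
    simpa [hf] using this
  have h1 : ∑ j ∈ Finset.range q, f (j+1) = S := by
    have a1 := Finset.sum_range_succ' f q
    have a2 := Finset.sum_range_succ f q
    rw [a2, hfq] at a1
    exact add_right_cancel a1.symm
  have h2 : ∑ j ∈ Finset.range q, f (j+2) = S := by
    have a1 := Finset.sum_range_succ' (fun j => f (j+1)) q
    have a2 := Finset.sum_range_succ (fun j => f (j+1)) q
    rw [a2, hfq1] at a1
    have := add_right_cancel a1.symm
    rw [this, h1]
  have h3 : S = κbar • S - κ • S := by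
    calc S = ∑ j ∈ Finset.range q, f (j+2) := h2.symm
    _ = ∑ j ∈ Finset.range q, (κbar • f (j+1) - κ • f j) := by
        refine Finset.sum_congr rfl (fun j _ => ?_)
        have hj := hrec2 (j:ℤ)
        simp only [hf]
        rw [show ((j+2:ℕ):ℤ) = (j:ℤ)+2 by push_cast; ring,
          show ((j+1:ℕ):ℤ) = (j:ℤ)+1 by push_cast; ring, hj]
    _ = κbar • (∑ j ∈ Finset.range q, f (j+1)) - κ • (∑ j ∈ Finset.range q, f j) := by
        rw [Finset.sum_sub_distrib, Finset.smul_sum, Finset.smul_sum]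
    _ = κbar • S - κ • S := by rw [h1]
  have hS0 : S = 0 := by
    have h4 : (κbar - 1 - κ) • S = 0 := by
      have e : κbar • S - κ • S - S = 0 := by rw [← h3, sub_self]
      rw [sub_smul, sub_smul, one_smul]
      calc κbar • S - S - κ • S = κbar • S - κ • S - S := by abel
      _ = 0 := e
    rcases smul_eq_zero.mp h4 with h | h
    · exact absurd h hne
    · exact h
  have const : ∀ k : ℤ, r (k + q) - r k = r (q:ℤ) - r 0 := by
    intro k
    induction k using Int.induction_on with
    | zero => rw [zero_add]
    | succ i ih =>
      rw [show (i:ℤ)+1+q = (i+q)+1 by ring, step_r r ((i:ℤ)+q), step_r r (i:ℤ), hper i]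
      rw [← ih]; abel
    | pred i ih =>
      have e1 := step_r r (-(i:ℤ)-1+q)
      have e2 := step_r r (-(i:ℤ)-1)
      rw [show -(i:ℤ)-1+q+1 = -(i:ℤ)+q by ring] at e1
      rw [show -(i:ℤ)-1+1 = -(i:ℤ) by ring] at e2
      rw [← ih, e1, e2, hper (-(i:ℤ)-1)]
      abel
  intro k
  have := const k
  rw [tsum_range r q, ← hf, ← hS, hS0] at this
  exact sub_eq_zero.mp (by rw [this])

lemma cs_of_trig (κbar θ : ℝ) (hsin : Real.sin θ ≠ 0) (h2c : 2*Real.cos θ = κbar)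
    (q : ℕ) (hcos : Real.cos ((q:ℝ)*θ) = 1) (hsinq : Real.sin ((q:ℝ)*θ) = 0) :
    cseq 1 κbar q = 1 ∧ sseq 1 κbar q = 0 ∧
      cseq 1 κbar (q+1) = 0 ∧ sseq 1 κbar (q+1) = 1 := by
  have hss := sin_sol θ q
  have hcc := cos_sol θ q
  rw [h2c] at hss hcc
  have hs0 : sseq 1 κbar q = 0 := by
    rw [hsinq] at hss
    rcases mul_eq_zero.mp hss.symm with h | h
    · exact absurd h hsin
    · exact h
  have hc1 : cseq 1 κbar q = 1 := by
    rw [hcos, hs0, mul_zero, add_zero] at hcc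
    exact hcc.symm
  have hss1 := sin_sol θ (q+1)
  have hcc1 := cos_sol θ (q+1)
  rw [h2c] at hss1 hcc1
  have e : ((q+1:ℕ):ℝ)*θ = (q:ℝ)*θ + θ := by push_cast; ring
  rw [e, Real.sin_add, hcos, hsinq] at hss1
  rw [e, Real.cos_add, hcos, hsinq] at hcc1
  have hs1 : sseq 1 κbar (q+1) = 1 := by
    have : Real.sin θ * 1 = Real.sin θ * sseq 1 κbar (q+1) := by
      rw [mul_one]; linarith [hss1]
    exact (mul_left_cancel₀ hsin this).symm
  refine ⟨hc1, hs0, ?_, hs1⟩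
  rw [hs1, mul_one] at hcc1
  linarith [hcc1]

lemma cs_of_tper (t : ℤ → Fin 2 → ℝ) (κ κbar : ℝ)
    (hrec2 : ∀ k : ℤ, t (k+2) = κbar • t (k+1) - κ • t k)
    (hD : det2 (t 0) (t 1) ≠ 0)
    (q : ℕ) (h0 : t (q:ℤ) = t 0) (h1 : t ((q:ℤ)+1) = t 1) :
    cseq κ κbar q = 1 ∧ sseq κ κbar q = 0 ∧
      cseq κ κbar (q+1) = 0 ∧ sseq κ κbar (q+1) = 1 := by
  have vf := vec_formula t κ κbar hrec2
  have e1 : (cseq κ κbar q - 1) • t 0 + sseq κ κbar q • t 1 = 0 := by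
    have h' : cseq κ κbar q • t 0 + sseq κ κbar q • t 1 = t 0 := by
      rw [← vf q, h0]
    rw [sub_smul, one_smul, add_comm, ← add_sub_assoc, add_comm, h']
    exact sub_self _
  obtain ⟨ha, hb⟩ := indep_components hD e1
  have e2 : cseq κ κbar (q+1) • t 0 + (sseq κ κbar (q+1) - 1) • t 1 = 0 := by
    have h' : cseq κ κbar (q+1) • t 0 + sseq κ κbar (q+1) • t 1 = t 1 := by
      rw [← vf (q+1)]
      rw [show ((q+1:ℕ):ℤ) = (q:ℤ)+1 by push_cast; ring, h1]
    rw [sub_smul, one_smul, ← add_sub_assoc, h']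
    exact sub_self _
  obtain ⟨hc, hd⟩ := indep_components hD e2
  exact ⟨by linarith, hb, hc, by linarith⟩

lemma closed_of_cs (r : ℤ → Fin 2 → ℝ) (κbar : ℝ) (hb2 : κbar ≠ 2)
    (hrec2 : ∀ k : ℤ, tang2 r (k+2) = κbar • tang2 r (k+1) - (1:ℝ) • tang2 r k)
    (q : ℕ) (hc : cseq 1 κbar q = 1) (hs : sseq 1 κbar q = 0)
    (hc1 : cseq 1 κbar (q+1) = 0) (hs1 : sseq 1 κbar (q+1) = 1) :
    ∀ k : ℤ, r (k + q) = r k := by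
  have vf := vec_formula (tang2 r) 1 κbar hrec2
  have t0 : tang2 r (q:ℤ) = tang2 r 0 := by rw [vf q, hc, hs]; simp
  have t1 : tang2 r ((q:ℤ)+1) = tang2 r 1 := by
    have h := vf (q+1)
    rw [hc1, hs1, show ((q+1:ℕ):ℤ) = (q:ℤ)+1 by push_cast; ring] at h
    simpa using h
  have hper := per_ext (tang2 r) 1 κbar one_ne_zero hrec2 q t0 t1
  exact closed_of_per r 1 κbar (by intro h; exact hb2 (by linarith)) hrec2 q hper


lemma vanish_of_det2 {u v : Fin 2 → ℝ} (h : det2 u v ≠ 0) {x : Fin 2 → ℝ}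
    (h1 : det2 u x = 0) (h2 : det2 v x = 0) : x = 0 := by
  simp only [det2] at h1 h2
  have e0 : det2 u v * x 0 = 0 := by
    simp only [det2]; linear_combination v 0 * h1 - u 0 * h2
  have e1 : det2 u v * x 1 = 0 := by
    simp only [det2]; linear_combination v 1 * h1 - u 1 * h2
  have hx0 : x 0 = 0 := (mul_eq_zero.mp e0).resolve_left h
  have hx1 : x 1 = 0 := (mul_eq_zero.mp e1).resolve_left h
  funext i
  fin_cases i
  · exact hx0
  · exact hx1

lemma pm_one_of_pow_eq_one (x : ℝ) (p : ℕ) (hp : p ≠ 0) (h : x ^ p = 1) :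
    x = 1 ∨ x = -1 := by
  have h1 : |x| ^ p = 1 := by rw [← abs_pow, h, abs_one]
  have h2 : |x| = 1 := by
    rcases lt_trichotomy |x| 1 with hl | he | hg
    · nlinarith [pow_lt_one₀ (abs_nonneg x) hl hp]
    · exact he
    · nlinarith [one_lt_pow₀ hg hp]
  exact (abs_eq (by norm_num)).mp h2

end Stmt5Aux

open Stmt5Aux in
open Real in
theorem stmt_5' (r : ℤ → Fin 2 → ℝ) (hr : ∀ k : ℤ, det2 (tang2 r (k - 1)) (tang2 r k) ≠ 0)
    (κ κbar : ℝ) (hκ : κ ≠ 0)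
    (hconst : ∀ k : ℤ, (det2 (tang2 r k) (tang2 r (k + 1)) / det2 (tang2 r (k - 1)) (tang2 r k) = κ) ∧
      (det2 (tang2 r (k - 1)) (tang2 r (k + 1)) / det2 (tang2 r (k - 1)) (tang2 r k) = κbar))
    (p : ℕ) (hp : 3 ≤ p) :
    ((∀ k : ℤ, r (k + p) = r k) ∧
        ∀ q : ℕ, 0 < q → (∀ k : ℤ, r (k + q) = r k) → p ≤ q) ↔
      κ = 1 ∧ |κbar| ≤ 2 ∧
        ∃ (θ : ℝ) (l : ℤ), Int.gcd l p = 1 ∧ Real.cos θ = κbar / 2 ∧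
          (p : ℝ) * θ = 2 * (l : ℝ) * π := by
  have hppos : 0 < p := by omega
  have hp0 : p ≠ 0 := by omega
  have hD : det2 (tang2 r 0) (tang2 r 1) ≠ 0 := by
    have h := hr 1
    norm_num at h
    exact h
  have hrec : ∀ k : ℤ, tang2 r (k+1) = κbar • tang2 r k - κ • tang2 r (k-1) := by
    intro k
    have hDk := hr k
    have h1 := (hconst k).2
    have h2 := (hconst k).1
    rw [div_eq_iff hDk] at h1 h2
    have hz : tang2 r (k+1) - (κbar • tang2 r k - κ • tang2 r (k-1)) = 0 := by
      apply vanish_of_det2 hDk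
      · simp only [det2, Pi.sub_apply, Pi.smul_apply, smul_eq_mul] at h1 h2 ⊢
        linear_combination h1
      · simp only [det2, Pi.sub_apply, Pi.smul_apply, smul_eq_mul] at h1 h2 ⊢
        linear_combination h2
    exact sub_eq_zero.mp hz
  have hrec2 : ∀ k : ℤ, tang2 r (k+2) = κbar • tang2 r (k+1) - κ • tang2 r k := by
    intro k
    have h := hrec (k+1)
    rw [show k+1+1 = k+2 by ring, show k+1-1 = k by ring] at h
    exact h
  constructor
  · rintro ⟨hcl, hmin⟩
    have tper : ∀ k : ℤ, tang2 r (k + p) = tang2 r k := by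
      intro k
      simp only [tang2]
      rw [show k + (p:ℤ) + 1 = (k+1) + p by ring, hcl (k+1), hcl k]
    have tp0 : tang2 r ((p:ℕ):ℤ) = tang2 r 0 := by simpa using tper 0
    have tp1 : tang2 r (((p:ℕ):ℤ)+1) = tang2 r 1 := by
      have h := tper 1
      rw [show (1:ℤ) + p = ((p:ℕ):ℤ)+1 by ring] at h
      exact h
    obtain ⟨cp1, sp0, cp1', sp1'⟩ := cs_of_tper (tang2 r) κ κbar hrec2 hD p tp0 tp1
    have hκp : κ ^ p = 1 := by
      have h := casoratian κ κbar p
      rw [cp1, sp0, cp1', sp1'] at h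
      linarith [h]
    have hκ1 : κ = 1 := by
      rcases pm_one_of_pow_eq_one κ p hp0 hκp with h | h
      · exact h
      · exfalso
        have hs4 : (0:ℝ) ≤ κbar^2 + 4 := by positivity
        have hq := Real.sq_sqrt hs4
        set lam := (κbar + Real.sqrt (κbar^2+4))/2 with hlam
        have hlam2 : lam^2 = κbar * lam + 1 := by
          rw [hlam]; linear_combination (1/4 : ℝ) * hq
        have hurec : ∀ n : ℕ, lam^(n+2) = κbar * lam^(n+1) - κ * lam^n := by
          intro n; rw [h]; linear_combination lam^n * hlam2
        have hup := sol_eval κ κbar (fun n => lam^n) hurec p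
        simp only [pow_zero, pow_one, cp1, sp0] at hup
        have hlp : lam^p = 1 := by rw [hup]; ring
        have hlam0 : lam = 1 ∨ lam = -1 := pm_one_of_pow_eq_one lam p hp0 hlp
        have hlamsq : lam^2 = 1 := by rcases hlam0 with h' | h' <;> rw [h'] <;> norm_num
        have hlamne : lam ≠ 0 := by rcases hlam0 with h' | h' <;> rw [h'] <;> norm_num
        have hkb0 : κbar = 0 := by
          have hz : κbar * lam = 0 := by linarith [hlam2, hlamsq]
          rcases mul_eq_zero.mp hz with h' | h'
          · exact h'
          · exact absurd h' hlamne
        have h2per : ∀ k : ℤ, tang2 r (k+2) = tang2 r k := by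
          intro k
          rw [hrec2 k, h, hkb0]
          funext i; simp
        have hev : Even p := by
          rcases Nat.even_or_odd p with he | ho
          · exact he
          · exfalso
            rw [h, ho.neg_one_pow] at hκp
            norm_num at hκp
        obtain ⟨m, hm⟩ := hev
        have htj : ∀ j : ℕ, tang2 r ((2*j:ℕ):ℤ) = tang2 r 0 ∧
            tang2 r (((2*j:ℕ):ℤ)+1) = tang2 r 1 := by
          intro j
          induction j with
          | zero => norm_num
          | succ j ih =>
            have e : ((2*(j+1):ℕ):ℤ) = ((2*j:ℕ):ℤ) + 2 := by push_cast; ring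
            constructor
            · rw [e, h2per]; exact ih.1
            · rw [e, show ((2*j:ℕ):ℤ)+2+1 = (((2*j:ℕ):ℤ)+1)+2 by ring, h2per]
              exact ih.2
        have hsum : ∀ j : ℕ, ∑ i ∈ Finset.range (2*j), tang2 r (i:ℤ)
            = (j:ℝ) • (tang2 r 0 + tang2 r 1) := by
          intro j
          induction j with
          | zero => simp
          | succ j ih =>
            rw [show 2*(j+1) = (2*j+1)+1 by ring, Finset.sum_range_succ,
              Finset.sum_range_succ, ih]
            rw [show ((2*j+1:ℕ):ℤ) = ((2*j:ℕ):ℤ)+1 by push_cast; ring,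
              (htj j).1, (htj j).2]
            push_cast
            rw [add_smul, one_smul]
            abel
        have hm2 : 2 ≤ m := by omega
        have hzero : (m:ℝ) • (tang2 r 0 + tang2 r 1) = 0 := by
          rw [← hsum m, show 2*m = p by omega]
          rw [← tsum_range r p]
          have := hcl 0
          rw [zero_add] at this
          rw [this, sub_self]
        have hsum0 : tang2 r 0 + tang2 r 1 = 0 := by
          rcases smul_eq_zero.mp hzero with h' | h'
          · exact absurd h' (by positivity)
          · exact h'
        have ht1 : tang2 r 1 = - tang2 r 0 := by
          rw [← eq_neg_of_add_eq_zero_right hsum0]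
        apply hD
        rw [ht1]
        simp only [det2, Pi.neg_apply]
        ring
    subst hκ1
    have hb2 : κbar ≠ 2 := by
      intro hb
      have h := sol_eval 1 κbar (fun n => (n:ℝ)) (fun n => by push_cast; rw [hb]; ring) p
      simp only [Nat.cast_zero, Nat.cast_one, cp1, sp0] at h
      have : (p:ℝ) = 0 := by rw [h]; ring
      have : p = 0 := by exact_mod_cast this
      omega
    have hbm2 : κbar ≠ -2 := by
      intro hb
      have h := sol_eval 1 κbar (fun n => (n:ℝ)*(-1)^n)
        (fun n => by push_cast; rw [hb]; ring) p
      simp only [Nat.cast_zero, Nat.cast_one, cp1, sp0, pow_zero, pow_one] at h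
      have h0 : (p:ℝ)*(-1)^p = 0 := by rw [h]; ring
      rcases mul_eq_zero.mp h0 with h' | h'
      · have : p = 0 := by exact_mod_cast h'
        omega
      · exact absurd h' (pow_ne_zero p (by norm_num))
    have habs : κbar^2 < 4 := by
      by_contra hge
      push_neg at hge
      have hs4 : (0:ℝ) ≤ κbar^2 - 4 := by linarith
      have hq := Real.sq_sqrt hs4
      set lam := (κbar + Real.sqrt (κbar^2-4))/2 with hlam
      have hlam2 : lam^2 = κbar * lam - 1 := by
        rw [hlam]; linear_combination (1/4 : ℝ) * hq
      have hurec : ∀ n : ℕ, lam^(n+2) = κbar * lam^(n+1) - 1 * lam^n := by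
        intro n; linear_combination lam^n * hlam2
      have hup := sol_eval 1 κbar (fun n => lam^n) hurec p
      simp only [pow_zero, pow_one, cp1, sp0] at hup
      have hlp : lam^p = 1 := by rw [hup]; ring
      rcases pm_one_of_pow_eq_one lam p hp0 hlp with h' | h'
      · rw [h'] at hlam2; exact hb2 (by nlinarith)
      · rw [h'] at hlam2; exact hbm2 (by nlinarith)
    have hm2 : -2 < κbar := by nlinarith
    have hl2 : κbar < 2 := by nlinarith
    set θ := Real.arccos (κbar/2) with hθ
    have hcosθ : Real.cos θ = κbar/2 := Real.cos_arccos (by linarith) (by linarith)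
    have h2c : 2 * Real.cos θ = κbar := by rw [hcosθ]; ring
    have hsinθ : Real.sin θ ≠ 0 := by
      intro h0
      have h := Real.sin_sq_add_cos_sq θ
      rw [h0, hcosθ] at h
      nlinarith
    have hcosp : Real.cos ((p:ℝ)*θ) = 1 := by
      rw [cos_sol θ p, h2c, cp1, sp0]; ring
    obtain ⟨l, hl⟩ := (Real.cos_eq_one_iff _).mp hcosp
    refine ⟨rfl, abs_le.mpr ⟨by linarith, by linarith⟩, θ, l, ?_, hcosθ, by linarith [hl]⟩
    by_contra hg
    have hg0 : Int.gcd l p ≠ 0 := by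
      intro h0
      have h' := (Int.gcd_eq_zero_iff.mp h0).2
      have : p = 0 := by exact_mod_cast h'
      omega
    have hg2 : 2 ≤ Int.gcd l p := by omega
    have hgp : ((Int.gcd l p : ℕ):ℤ) ∣ (p:ℤ) := Int.gcd_dvd_right _ _
    have hgl : ((Int.gcd l p : ℕ):ℤ) ∣ l := Int.gcd_dvd_left _ _
    obtain ⟨q, hq⟩ := Int.natCast_dvd_natCast.mp hgp
    have hq0 : 0 < q := by
      rcases Nat.eq_zero_or_pos q with h0 | h0
      · rw [h0, Nat.mul_zero] at hq; omega
      · exact h0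
    have hqp : q < p := by nlinarith [hq, hq0, hg2]
    obtain ⟨l', hl'⟩ := hgl
    have hgR : ((Int.gcd l p : ℕ):ℝ) ≠ 0 := Nat.cast_ne_zero.mpr (by omega)
    have hqθ : (q:ℝ)*θ = (l':ℝ)*(2*π) := by
      apply mul_left_cancel₀ hgR
      have e1 := congrArg (fun n : ℕ => (n:ℝ)) hq
      have e2 := congrArg (fun z : ℤ => (z:ℝ)) hl'
      push_cast at e1 e2
      rw [e1, e2] at hl
      linear_combination -hl
    have hsinq : Real.sin ((q:ℝ)*θ) = 0 := by
      rw [hqθ, show (l':ℝ)*(2*π) = ((2*l' : ℤ):ℝ)*π by push_cast; ring]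
      exact Real.sin_int_mul_pi _
    have hcosq : Real.cos ((q:ℝ)*θ) = 1 := by
      rw [hqθ]; exact Real.cos_int_mul_two_pi l'
    obtain ⟨c1, s0, c0, s1⟩ := cs_of_trig κbar θ hsinθ h2c q hcosq hsinq
    have hcls := closed_of_cs r κbar hb2 hrec2 q c1 s0 c0 s1
    exact absurd (hmin q hq0 hcls) (by omega)
  · rintro ⟨hκ1, -, θ, l, hgcd, hcosθ, hpθ⟩
    subst hκ1
    have hπ := Real.pi_ne_zero
    have hp3 : (3:ℤ) ≤ (p:ℤ) := by exact_mod_cast hp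
    have hsinθ : Real.sin θ ≠ 0 := by
      intro h0
      obtain ⟨m, hm⟩ := Real.sin_eq_zero_iff.mp h0
      have hreal : (p:ℝ)*(m:ℝ) = 2*(l:ℝ) := by
        apply mul_right_cancel₀ hπ
        rw [← hm] at hpθ
        linear_combination hpθ
      have hpm : (p:ℤ)*m = 2*l := by exact_mod_cast hreal
      rcases Int.even_or_odd m with ⟨n, hn⟩ | ⟨n, hn⟩
      · have h2l : 2*l = 2*((p:ℤ)*n) := by rw [hn] at hpm; linear_combination -hpm
        have hpl : (p:ℤ) ∣ l := ⟨n, mul_left_cancel₀ two_ne_zero h2l⟩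
        have hd := Int.dvd_coe_gcd hpl (dvd_refl ((p:ℤ)))
        rw [hgcd] at hd
        have := Int.le_of_dvd one_pos hd
        omega
      · have hdvd : (p:ℤ) ∣ 2*l := ⟨2*n+1, by rw [hn] at hpm; linear_combination -hpm⟩
        have hco : IsCoprime ((p:ℤ)) l :=
          Int.isCoprime_iff_gcd_eq_one.mpr (by rw [Int.gcd_comm]; exact hgcd)
        have := hco.dvd_of_dvd_mul_right hdvd
        have := Int.le_of_dvd two_pos this
        omega
    have hb2 : κbar ≠ 2 := by
      intro hb
      apply hsinθ
      have h := Real.sin_sq_add_cos_sq θ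
      rw [hcosθ, hb] at h
      norm_num at h
      exact pow_eq_zero_iff (n := 2) (by norm_num) |>.mp (by nlinarith)
    have h2c : 2*Real.cos θ = κbar := by rw [hcosθ]; ring
    have hcosp : Real.cos ((p:ℝ)*θ) = 1 := by
      rw [show (p:ℝ)*θ = (l:ℝ)*(2*π) by linarith [hpθ]]
      exact Real.cos_int_mul_two_pi l
    have hsinp : Real.sin ((p:ℝ)*θ) = 0 := by
      rw [show (p:ℝ)*θ = ((2*l:ℤ):ℝ)*π by push_cast; linarith [hpθ]]
      exact Real.sin_int_mul_pi _
    obtain ⟨c1, s0, c0, s1⟩ := cs_of_trig κbar θ hsinθ h2c p hcosp hsinp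
    have hcls := closed_of_cs r κbar hb2 hrec2 p c1 s0 c0 s1
    refine ⟨hcls, ?_⟩
    intro q hq0 hclq
    have tq : tang2 r ((q:ℕ):ℤ) = tang2 r 0 := by
      have a1 := hclq 1
      have a0 := hclq 0
      rw [show (1:ℤ)+q = ((q:ℕ):ℤ)+1 by ring] at a1
      rw [zero_add] at a0
      simp only [tang2]
      rw [a1, a0]
      norm_num
    have tq1 : tang2 r (((q:ℕ):ℤ)+1) = tang2 r 1 := by
      have a2 := hclq 2
      have a1 := hclq 1
      rw [show (2:ℤ)+q = ((q:ℕ):ℤ)+1+1 by ring] at a2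
      rw [show (1:ℤ)+q = ((q:ℕ):ℤ)+1 by ring] at a1
      simp only [tang2]
      rw [a2, a1]
      norm_num
    obtain ⟨cq1, sq0, -, -⟩ := cs_of_tper (tang2 r) 1 κbar hrec2 hD q tq tq1
    have hcosq : Real.cos ((q:ℝ)*θ) = 1 := by
      rw [cos_sol θ q, h2c, cq1, sq0]; ring
    obtain ⟨n, hn⟩ := (Real.cos_eq_one_iff _).mp hcosq
    have h2π : (2*π : ℝ) ≠ 0 := by positivity
    have hql : (q:ℤ)*l = n*(p:ℤ) := by
      have hr2 : (((q:ℤ)*l : ℤ) : ℝ)*(2*π) = (((n*(p:ℤ)) : ℤ) : ℝ)*(2*π) := by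
        push_cast
        linear_combination -((q:ℝ)*hpθ) - (p:ℝ)*hn
      have := mul_right_cancel₀ h2π hr2
      exact_mod_cast this
    have hpd : (p:ℤ) ∣ (q:ℤ)*l := ⟨n, by linarith [hql]⟩
    have hco : IsCoprime ((p:ℤ)) l :=
      Int.isCoprime_iff_gcd_eq_one.mpr (by rw [Int.gcd_comm]; exact hgcd)
    have hpq : (p:ℤ) ∣ (q:ℤ) := hco.dvd_of_dvd_mul_right hpd
    have hle := Int.le_of_dvd (by exact_mod_cast hq0) hpq
    exact_mod_cast hle

open Real in
/-- Closedness criterion for a discrete planar curve with constant centroaffine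
curvatures. -/
theorem stmt_5 (r : ℤ → Fin 2 → ℝ) (hr : Nondeg2 r) (κ κbar : ℝ) (hκ : κ ≠ 0)
    (hconst : ∀ k : ℤ, kappa2 r k = κ ∧ kbar2 r k = κbar)
    (p : ℕ) (hp : 3 ≤ p) :
    ((∀ k : ℤ, r (k + p) = r k) ∧
        ∀ q : ℕ, 0 < q → (∀ k : ℤ, r (k + q) = r k) → p ≤ q) ↔
      κ = 1 ∧ |κbar| ≤ 2 ∧
        ∃ (θ : ℝ) (l : ℤ), Int.gcd l p = 1 ∧ Real.cos θ = κbar / 2 ∧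
          (p : ℝ) * θ = 2 * (l : ℝ) * π := by
  exact stmt_5' r hr κ κbar hκ hconst p hp
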